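/- For any arithmetic function F : ℕ → ℂ with Eratosthenes transform F' = F ∗ μ (Dirichlet convolution with the Möbius function), and any Q ∈ ℕ, for all a ∈ ℕ one has ∑_{d | a, d Q-smooth} F'(d) = ∑_{t | a, t Q-smooth, (a/t) Q-sifted} F(t), where a positive integer is Q-smooth if all its prime factors are ≤ Q, and Q-sifted if it is coprime to every prime ≤ Q. -/
import Mathlib

open scoped BigOperators
open ArithmeticFunction

/-- `n` is `Q`-smooth: every prime factor of `n` is `≤ Q`. -/
def QSmooth (Q n : ℕ) : Prop := ∀ p ∈ n.primeFactors, p ≤ Q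
instance (Q n : ℕ) : Decidable (QSmooth Q n) := by unfold QSmooth; infer_instance
/-- `n` is `Q`-sifted: coprime to every prime `≤ Q`. -/
def QSifted (Q n : ℕ) : Prop := ∀ p ∈ n.primeFactors, Q < p
instance (Q n : ℕ) : Decidable (QSifted Q n) := by unfold QSifted; infer_instance
/-- Eratosthenes transform `F' = F ∗ μ`. -/
noncomputable def era (F : ℕ → ℂ) (d : ℕ) : ℂ :=
  ∑ t ∈ d.divisors, F t * (moebius (d / t) : ℤ)
/-- Ramanujan sum `c_q(n) = ∑_{d ∣ (q,n)} d μ(q/d)`. -/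
def ramanujanSum (q n : ℕ) : ℤ :=
  ∑ d ∈ (Nat.gcd q n).divisors, (d : ℤ) * moebius (q / d)

lemma swap_div (a : ℕ) (ha : a ≠ 0) (f : ℕ → ℕ → ℂ) :
    ∑ d ∈ a.divisors, ∑ x ∈ d.divisorsAntidiagonal, f x.1 x.2
      = ∑ t ∈ a.divisors, ∑ m ∈ (a / t).divisors, f t m := by
  rw [Finset.sum_sigma', Finset.sum_sigma']
  refine Finset.sum_nbij' (fun x => ⟨x.2.1, x.2.2⟩) (fun x => ⟨x.1 * x.2, (x.1, x.2)⟩)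
    ?_ ?_ ?_ ?_ ?_
  · rintro ⟨d, t, m⟩ h
    rw [Finset.mem_sigma, Nat.mem_divisors, Nat.mem_divisorsAntidiagonal] at h
    obtain ⟨⟨hda, -⟩, htm, -⟩ := h
    dsimp only at hda htm ⊢
    subst htm
    have ht : t ∣ a := dvd_trans (Dvd.intro m rfl) hda
    have ht0 : t ≠ 0 := by rintro rfl; exact ha (zero_dvd_iff.mp (by simpa using hda))
    rw [Finset.mem_sigma, Nat.mem_divisors, Nat.mem_divisors]
    refine ⟨⟨ht, ha⟩, ?_, ?_⟩
    · exact (Nat.dvd_div_iff_mul_dvd ht).mpr hda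
    · exact (Nat.div_pos (Nat.le_of_dvd (Nat.pos_of_ne_zero ha) ht)
        (Nat.pos_of_ne_zero ht0)).ne'
  · rintro ⟨t, m⟩ h
    rw [Finset.mem_sigma, Nat.mem_divisors, Nat.mem_divisors] at h
    obtain ⟨⟨hta, -⟩, hm, -⟩ := h
    have htm : t * m ∣ a := (Nat.dvd_div_iff_mul_dvd hta).mp hm
    rw [Finset.mem_sigma, Nat.mem_divisors, Nat.mem_divisorsAntidiagonal]
    exact ⟨⟨htm, ha⟩, rfl, fun h0 => ha (zero_dvd_iff.mp (h0 ▸ htm))⟩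
  · rintro ⟨d, t, m⟩ h
    rw [Finset.mem_sigma, Nat.mem_divisorsAntidiagonal] at h
    obtain ⟨-, htm, -⟩ := h
    simp only [htm]
  · rintro ⟨t, m⟩ h; rfl
  · rintro ⟨d, t, m⟩ h; rfl

lemma smooth_moebius_sum (Q n : ℕ) (hn : n ≠ 0) :
    ∑ m ∈ n.divisors.filter (fun m => QSmooth Q m), ((moebius m : ℤ) : ℂ)
      = if QSifted Q n then 1 else 0 := by
  set P := n.primeFactors.filter (· ≤ Q) with hP
  set s := ∏ p ∈ P, p with hs
  have hPprime : ∀ p ∈ P, p.Prime := fun p hp =>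
    Nat.prime_of_mem_primeFactors (Finset.mem_filter.mp hp).1
  have hs0 : s ≠ 0 := Finset.prod_ne_zero_iff.mpr fun p hp => (hPprime p hp).ne_zero
  have hsfac : s.primeFactors = P := Nat.primeFactors_prod hPprime
  have hsn : s ∣ n :=
    dvd_trans (Finset.prod_dvd_prod_of_subset _ _ _ (Finset.filter_subset _ _))
      (Nat.prod_primeFactors_dvd n)
  have hsub : s.divisors ⊆ n.divisors.filter (fun m => QSmooth Q m) := by
    intro m hm
    rw [Nat.mem_divisors] at hm
    refine Finset.mem_filter.mpr ⟨Nat.mem_divisors.mpr ⟨hm.1.trans hsn, hn⟩, fun p hp => ?_⟩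
    have := Nat.primeFactors_mono hm.1 hs0 hp
    rw [hsfac] at this
    exact (Finset.mem_filter.mp this).2
  have hzero : ∀ m ∈ n.divisors.filter (fun m => QSmooth Q m), m ∉ s.divisors →
      ((moebius m : ℤ) : ℂ) = 0 := by
    intro m hm hms
    rw [Finset.mem_filter, Nat.mem_divisors] at hm
    by_cases hsq : Squarefree m
    · exfalso
      apply hms
      rw [Nat.mem_divisors]
      refine ⟨?_, hs0⟩
      have : m.primeFactors ⊆ P := by
        intro p hp
        exact Finset.mem_filter.mpr ⟨Nat.primeFactors_mono hm.1.1 hn hp, hm.2 p hp⟩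
      calc m = ∏ p ∈ m.primeFactors, p := (Nat.prod_primeFactors_of_squarefree hsq).symm
        _ ∣ ∏ p ∈ P, p := Finset.prod_dvd_prod_of_subset _ _ _ this
    · rw [moebius_eq_zero_of_not_squarefree hsq]; simp
  rw [← Finset.sum_subset hsub hzero]
  have : ∑ m ∈ s.divisors, (moebius m : ℤ) = if s = 1 then 1 else 0 := by
    have h := ArithmeticFunction.ext_iff.mp moebius_mul_coe_zeta s
    rwa [coe_mul_zeta_apply, one_apply] at h
  have hcast : ∑ m ∈ s.divisors, ((moebius m : ℤ) : ℂ)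
      = ((∑ m ∈ s.divisors, (moebius m : ℤ) : ℤ) : ℂ) := by push_cast; rfl
  rw [hcast, this]
  have hiff : QSifted Q n ↔ s = 1 := by
    constructor
    · intro h
      have : P = ∅ := Finset.filter_eq_empty_iff.mpr (fun {p} hp => not_le.mpr (h p hp))
      simp [hs, this]
    · intro h p hp
      by_contra hle
      have : p ∈ P := Finset.mem_filter.mpr ⟨hp, not_lt.mp hle⟩
      rw [← hsfac, h] at this
      simp at this
  by_cases h : QSifted Q n
  · rw [if_pos h, if_pos (hiff.mp h)]; norm_num
  · rw [if_neg h, if_neg (fun hc => h (hiff.mpr hc))]; norm_num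

set_option maxHeartbeats 1000000 in
theorem moebius_switch (F : ℕ → ℂ) (Q : ℕ) (a : ℕ) (ha : 0 < a) :
    ∑ d ∈ a.divisors.filter (fun d => QSmooth Q d), era F d =
      ∑ t ∈ a.divisors.filter (fun t => QSmooth Q t ∧ QSifted Q (a / t)), F t := by
  have ha' : a ≠ 0 := ha.ne'
  have hsm : ∀ t m : ℕ, t ≠ 0 → m ≠ 0 → (QSmooth Q (t * m) ↔ QSmooth Q t ∧ QSmooth Q m) := by
    intro t m ht hm
    unfold QSmooth
    rw [Nat.primeFactors_mul ht hm]
    constructor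
    · intro h
      exact ⟨fun p hp => h p (Finset.mem_union_left _ hp),
             fun p hp => h p (Finset.mem_union_right _ hp)⟩
    · rintro ⟨h1, h2⟩ p hp
      rcases Finset.mem_union.mp hp with h | h
      · exact h1 p h
      · exact h2 p h
  calc ∑ d ∈ a.divisors.filter (fun d => QSmooth Q d), era F d
      = ∑ d ∈ a.divisors, ∑ x ∈ d.divisorsAntidiagonal,
          (if QSmooth Q (x.1 * x.2) then F x.1 * ((moebius x.2 : ℤ) : ℂ) else 0) := by
        rw [Finset.sum_filter]
        refine Finset.sum_congr rfl fun d hd => ?_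
        rw [Nat.mem_divisors] at hd
        by_cases h : QSmooth Q d
        · rw [if_pos h]
          unfold era
          rw [← Nat.sum_divisorsAntidiagonal (fun x y => F x * ((moebius y : ℤ) : ℂ))]
          refine Finset.sum_congr rfl fun x hx => ?_
          rw [if_pos ((Nat.mem_divisorsAntidiagonal.mp hx).1.symm ▸ h)]
        · rw [if_neg h]
          refine (Finset.sum_eq_zero fun x hx => ?_).symm
          rw [if_neg ((Nat.mem_divisorsAntidiagonal.mp hx).1.symm ▸ h)]
    _ = ∑ t ∈ a.divisors, ∑ m ∈ (a / t).divisors,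
          (if QSmooth Q (t * m) then F t * ((moebius m : ℤ) : ℂ) else 0) :=
        swap_div a ha' (fun t m => if QSmooth Q (t * m) then F t * ((moebius m : ℤ) : ℂ) else 0)
    _ = ∑ t ∈ a.divisors.filter (fun t => QSmooth Q t),
          F t * ∑ m ∈ (a / t).divisors.filter (fun m => QSmooth Q m), ((moebius m : ℤ) : ℂ) := by
        rw [Finset.sum_filter]
        refine Finset.sum_congr rfl fun t ht => ?_
        rw [Nat.mem_divisors] at ht
        have ht0 : t ≠ 0 := fun h => ha' (zero_dvd_iff.mp (h ▸ ht.1))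
        rw [Finset.mul_sum, Finset.sum_filter]
        by_cases h : QSmooth Q t
        · rw [if_pos h]
          refine Finset.sum_congr rfl fun m hm => ?_
          rw [Nat.mem_divisors] at hm
          have hm0 : m ≠ 0 := fun hc => hm.2 (by simpa [hc] using hm.1)
          simp only [hsm t m ht0 hm0]
          by_cases h2 : QSmooth Q m
          · rw [if_pos ⟨h, h2⟩, if_pos h2]
          · simp [h2]
        · rw [if_neg h]
          refine Finset.sum_eq_zero fun m hm => ?_
          rw [Nat.mem_divisors] at hm
          have hm0 : m ≠ 0 := fun hc => hm.2 (by simpa [hc] using hm.1)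
          simp only [hsm t m ht0 hm0]; rw [if_neg (fun hc => h hc.1)]
    _ = ∑ t ∈ a.divisors.filter (fun t => QSmooth Q t ∧ QSifted Q (a / t)), F t := by
        rw [← Finset.filter_filter, Finset.sum_filter (fun t => QSifted Q (a / t))]
        refine Finset.sum_congr rfl fun t ht => ?_
        rw [Finset.mem_filter, Nat.mem_divisors] at ht
        have ht0 : t ≠ 0 := fun h => ha' (zero_dvd_iff.mp (h ▸ ht.1.1))
        have hat : a / t ≠ 0 :=
          (Nat.div_pos (Nat.le_of_dvd ha ht.1.1) (Nat.pos_of_ne_zero ht0)).ne'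
        rw [smooth_moebius_sum Q (a / t) hat]
        by_cases h : QSifted Q (a / t)
        · rw [if_pos h, if_pos h, mul_one]
        · rw [if_neg h, if_neg h, mul_zero]
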